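/- Let H ∈ (1/2,1), T > 0, and let (λ_k)_{k∈ℕ} be a sequence of positive reals and (q_k)_{k∈ℕ} a real sequence with ∑_{k=1}^∞ q_k²/λ_k^{2H} < ∞. Then ∑_{k=1}^∞ q_k² ∫₀ᵀ∫₀ᵀ e^{−λ_k s} e^{−λ_k t} |s−t|^{2H−2} ds dt < ∞. (Equivalently, ∑_k ‖q_k e^{−λ_k ·}‖²_{|M|} < ∞, which is the Hilbert–Schmidt criterion establishing existence of a weak solution of the stochastic heat equation dY = AY dt + dB driven by cylindrical fractional Brownian motion when A has eigenvalues −λ_k and the noise has weights q_k along the eigenbasis.) -/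

import Mathlib

open MeasureTheory Set
open scoped ENNReal

lemma aux_gamma {r b : ℝ} (hr : 0 < r) (hb : 0 < b) :
    ∫⁻ x in Set.Ioi (0:ℝ), ENNReal.ofReal (x ^ (r - 1) * Real.exp (-(b * x)))
      = ENNReal.ofReal ((1 / b) ^ r * Real.Gamma r) := by
  rw [← Real.integral_rpow_mul_exp_neg_mul_Ioi hr hb]
  rw [ofReal_integral_eq_lintegral_ofReal]
  · have h0 : IntegrableOn (fun x : ℝ => x ^ (r - 1) * Real.exp (-b * x)) (Set.Ioi 0) := by
      have := integrableOn_rpow_mul_exp_neg_mul_rpow (p := 1)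
        (by linarith : (-1:ℝ) < r - 1) one_pos hb
      simpa [Real.rpow_one] using this
    simpa [neg_mul, IntegrableOn] using h0
  · filter_upwards [ae_restrict_mem measurableSet_Ioi] with x hx
    have hx0 : (0:ℝ) < x := hx
    positivity

lemma aux_exp {b : ℝ} (hb : 0 < b) :
    ∫⁻ x in Set.Ioi (0:ℝ), ENNReal.ofReal (Real.exp (-(b * x))) = ENNReal.ofReal (1 / b) := by
  have h := aux_gamma (r := 1) one_pos hb
  rw [show ∫⁻ x in Set.Ioi (0:ℝ), ENNReal.ofReal (x ^ ((1:ℝ) - 1) * Real.exp (-(b * x)))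
      = ∫⁻ x in Set.Ioi (0:ℝ), ENNReal.ofReal (Real.exp (-(b * x))) from
    setLIntegral_congr_fun measurableSet_Ioi (fun x hx => by
      rw [show (1:ℝ) - 1 = 0 by ring, Real.rpow_zero, one_mul])] at h
  simpa [Real.Gamma_one, Real.rpow_one] using h

lemma aux_shift (f : ℝ → ℝ≥0∞) (s : ℝ) :
    ∫⁻ t in Set.Ioi s, f (t - s) = ∫⁻ u in Set.Ioi (0:ℝ), f u := by
  rw [← lintegral_indicator measurableSet_Ioi, ← lintegral_indicator measurableSet_Ioi]
  rw [← lintegral_sub_right_eq_self (fun t => (Set.Ioi (0:ℝ)).indicator f t) s]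
  refine lintegral_congr fun t => ?_
  simp only [Set.indicator_apply, Set.mem_Ioi, sub_pos]

lemma aux_main (H T : ℝ) (hH1 : 1 / 2 < H) (hH2 : H < 1) {b : ℝ} (hb : 0 < b) :
    (∫⁻ s in Set.Icc (0 : ℝ) T, ∫⁻ t in Set.Icc (0 : ℝ) T,
        ENNReal.ofReal (Real.exp (-b * s) * Real.exp (-b * t) * |s - t| ^ (2 * H - 2)))
      ≤ ENNReal.ofReal ((Real.Gamma (2 * H) / (2 * H - 1) + Real.Gamma (2 * H - 1))
          * (1 / b) ^ (2 * H)) := by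
  have h1 : (0:ℝ) < 2 * H - 1 := by linarith
  have hp : (-1:ℝ) < 2 * H - 2 := by linarith
  set Y : ℝ := (1 / b) ^ (2 * H - 1) * Real.Gamma (2 * H - 1) with hY
  have hYnn : 0 ≤ Y := by
    have := Real.Gamma_pos_of_pos h1
    positivity
  have inner_bound : ∀ s ∈ Set.Icc (0:ℝ) T,
      (∫⁻ t in Set.Icc (0 : ℝ) T,
        ENNReal.ofReal (Real.exp (-b * s) * Real.exp (-b * t) * |s - t| ^ (2 * H - 2)))
      ≤ ENNReal.ofReal (Real.exp (-b * s) * (s ^ (2*H-1) / (2*H-1)))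
        + ENNReal.ofReal (Real.exp (-b * s) * Y) := by
    intro s hs
    obtain ⟨hs0, hsT⟩ := hs
    have hsplit : Set.Icc (0:ℝ) T = Set.Icc 0 s ∪ Set.Icc s T :=
      (Set.Icc_union_Icc_eq_Icc hs0 hsT).symm
    rw [hsplit]
    refine le_trans (lintegral_union_le _ _ _) (add_le_add ?_ ?_)
    · -- part A : t ∈ [0, s]
      have step1 : (∫⁻ t in Set.Icc (0:ℝ) s,
            ENNReal.ofReal (Real.exp (-b * s) * Real.exp (-b * t) * |s - t| ^ (2 * H - 2)))
          ≤ ∫⁻ t in Set.Icc (0:ℝ) s,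
            ENNReal.ofReal (Real.exp (-b * s)) * ENNReal.ofReal ((s - t) ^ (2 * H - 2)) := by
        refine setLIntegral_mono' measurableSet_Icc fun t ht => ?_
        rw [← ENNReal.ofReal_mul (Real.exp_nonneg _)]
        apply ENNReal.ofReal_le_ofReal
        have habs : |s - t| = s - t := abs_of_nonneg (by linarith [ht.2])
        rw [habs]
        have h2 : Real.exp (-b * t) ≤ 1 := by
          rw [← Real.exp_zero]
          exact Real.exp_le_exp.mpr (by nlinarith [ht.1])
        have h3 : (0:ℝ) ≤ (s - t) ^ (2 * H - 2) := Real.rpow_nonneg (by linarith [ht.2]) _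
        calc Real.exp (-b*s) * Real.exp (-b*t) * (s-t)^(2*H-2)
            ≤ Real.exp (-b*s) * 1 * (s-t)^(2*H-2) :=
              mul_le_mul_of_nonneg_right
                (mul_le_mul_of_nonneg_left h2 (Real.exp_nonneg _)) h3
          _ = Real.exp (-b*s) * (s-t)^(2*H-2) := by ring
      have step3 : (∫⁻ t in Set.Icc (0:ℝ) s, ENNReal.ofReal ((s - t) ^ (2 * H - 2)))
          = ENNReal.ofReal (s ^ (2*H-1) / (2*H-1)) := by
        have hii : IntervalIntegrable (fun t : ℝ => (s - t) ^ (2*H-2)) volume 0 s := by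
          have h0 : IntervalIntegrable (fun x : ℝ => x ^ (2*H-2)) volume 0 s :=
            intervalIntegral.intervalIntegrable_rpow' hp
          have := h0.comp_sub_left s
          simpa using this.symm
        have hio : IntegrableOn (fun t : ℝ => (s - t) ^ (2*H-2)) (Set.Icc 0 s) volume :=
          (intervalIntegrable_iff_integrableOn_Icc_of_le hs0).mp hii
        rw [← ofReal_integral_eq_lintegral_ofReal hio
          (by filter_upwards [ae_restrict_mem measurableSet_Icc] with t ht
              exact Real.rpow_nonneg (by linarith [ht.2]) _)]
        congr 1
        rw [integral_Icc_eq_integral_Ioc, ← intervalIntegral.integral_of_le hs0]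
        rw [intervalIntegral.integral_comp_sub_left (fun x => x ^ (2*H-2)) s]
        simp only [sub_self, sub_zero]
        rw [integral_rpow (Or.inl hp)]
        rw [Real.zero_rpow (by linarith : 2*H-2+1 ≠ 0)]
        have he : 2*H-2+1 = 2*H-1 := by ring
        rw [he]
        ring
      calc (∫⁻ t in Set.Icc (0:ℝ) s,
            ENNReal.ofReal (Real.exp (-b * s) * Real.exp (-b * t) * |s - t| ^ (2 * H - 2)))
          ≤ ∫⁻ t in Set.Icc (0:ℝ) s,
            ENNReal.ofReal (Real.exp (-b * s)) * ENNReal.ofReal ((s - t) ^ (2 * H - 2)) := step1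
        _ = ENNReal.ofReal (Real.exp (-b * s)) *
              ∫⁻ t in Set.Icc (0:ℝ) s, ENNReal.ofReal ((s - t) ^ (2 * H - 2)) :=
            lintegral_const_mul' _ _ ENNReal.ofReal_ne_top
        _ = ENNReal.ofReal (Real.exp (-b * s)) * ENNReal.ofReal (s ^ (2*H-1) / (2*H-1)) := by
            rw [step3]
        _ = ENNReal.ofReal (Real.exp (-b * s) * (s ^ (2*H-1) / (2*H-1))) :=
            (ENNReal.ofReal_mul (Real.exp_nonneg _)).symm
    · -- part B : t ∈ [s, T]
      have stepB1 : (∫⁻ t in Set.Icc s T,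
            ENNReal.ofReal (Real.exp (-b * s) * Real.exp (-b * t) * |s - t| ^ (2 * H - 2)))
          ≤ ∫⁻ t in Set.Icc s T, ENNReal.ofReal (Real.exp (-b * s)) *
              ENNReal.ofReal ((t - s) ^ (2*H-2) * Real.exp (-(b * (t-s)))) := by
        refine setLIntegral_mono' measurableSet_Icc fun t ht => ?_
        rw [← ENNReal.ofReal_mul (Real.exp_nonneg _)]
        apply ENNReal.ofReal_le_ofReal
        have habs : |s - t| = t - s := by
          rw [abs_sub_comm]; exact abs_of_nonneg (by linarith [ht.1])
        rw [habs]
        have h2 : Real.exp (-b * t) ≤ Real.exp (-(b * (t - s))) :=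
          Real.exp_le_exp.mpr (by nlinarith)
        have h3 : (0:ℝ) ≤ (t - s) ^ (2 * H - 2) := Real.rpow_nonneg (by linarith [ht.1]) _
        calc Real.exp (-b*s) * Real.exp (-b*t) * (t-s)^(2*H-2)
            ≤ Real.exp (-b*s) * Real.exp (-(b*(t-s))) * (t-s)^(2*H-2) :=
              mul_le_mul_of_nonneg_right
                (mul_le_mul_of_nonneg_left h2 (Real.exp_nonneg _)) h3
          _ = Real.exp (-b*s) * ((t-s)^(2*H-2) * Real.exp (-(b*(t-s)))) := by ring
      have stepB2 : (∫⁻ t in Set.Icc s T,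
            ENNReal.ofReal ((t - s) ^ (2*H-2) * Real.exp (-(b * (t-s)))))
          ≤ ENNReal.ofReal Y := by
        calc (∫⁻ t in Set.Icc s T,
              ENNReal.ofReal ((t - s) ^ (2*H-2) * Real.exp (-(b * (t-s)))))
            ≤ ∫⁻ t in Set.Ioi s,
              ENNReal.ofReal ((t - s) ^ (2*H-2) * Real.exp (-(b * (t-s)))) := by
              rw [setLIntegral_congr (Ioc_ae_eq_Icc (a := s) (b := T)).symm]
              exact lintegral_mono_set Set.Ioc_subset_Ioi_self
          _ = ∫⁻ u in Set.Ioi (0:ℝ), ENNReal.ofReal (u ^ (2*H-2) * Real.exp (-(b * u))) :=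
              aux_shift (fun u => ENNReal.ofReal (u ^ (2*H-2) * Real.exp (-(b*u)))) s
          _ = ENNReal.ofReal Y := by
              have h := aux_gamma (r := 2*H-1) h1 hb
              rw [show (2*H-1) - 1 = 2*H-2 by ring] at h
              rw [h, hY]
      calc (∫⁻ t in Set.Icc s T,
            ENNReal.ofReal (Real.exp (-b * s) * Real.exp (-b * t) * |s - t| ^ (2 * H - 2)))
          ≤ ∫⁻ t in Set.Icc s T, ENNReal.ofReal (Real.exp (-b * s)) *
              ENNReal.ofReal ((t - s) ^ (2*H-2) * Real.exp (-(b * (t-s)))) := stepB1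
        _ = ENNReal.ofReal (Real.exp (-b * s)) *
              ∫⁻ t in Set.Icc s T,
                ENNReal.ofReal ((t - s) ^ (2*H-2) * Real.exp (-(b * (t-s)))) :=
            lintegral_const_mul' _ _ ENNReal.ofReal_ne_top
        _ ≤ ENNReal.ofReal (Real.exp (-b * s)) * ENNReal.ofReal Y :=
            mul_le_mul_right stepB2 _
        _ = ENNReal.ofReal (Real.exp (-b * s) * Y) :=
            (ENNReal.ofReal_mul (Real.exp_nonneg _)).symm
  have hmeas : Measurable fun s : ℝ =>
      ENNReal.ofReal (Real.exp (-b * s) * (s ^ (2*H-1) / (2*H-1))) := by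
    apply ENNReal.measurable_ofReal.comp
    exact ((Real.measurable_exp.comp (measurable_id.const_mul (-b))).mul
      ((Real.continuous_rpow_const h1.le).measurable.div_const _))
  have TA : (∫⁻ s in Set.Icc (0:ℝ) T,
        ENNReal.ofReal (Real.exp (-b*s) * (s ^ (2*H-1) / (2*H-1))))
      ≤ ENNReal.ofReal (Real.Gamma (2*H) / (2*H-1) * (1/b) ^ (2*H)) := by
    calc (∫⁻ s in Set.Icc (0:ℝ) T,
          ENNReal.ofReal (Real.exp (-b*s) * (s ^ (2*H-1) / (2*H-1))))
        = ∫⁻ s in Set.Icc (0:ℝ) T, ENNReal.ofReal (1/(2*H-1)) *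
            ENNReal.ofReal (s ^ (2 * H - 1) * Real.exp (-(b*s))) := by
          refine setLIntegral_congr_fun measurableSet_Icc (fun s hs => ?_)
          rw [← ENNReal.ofReal_mul (by positivity)]
          congr 1
          rw [neg_mul]
          ring
      _ = ENNReal.ofReal (1/(2*H-1)) *
            ∫⁻ s in Set.Icc (0:ℝ) T, ENNReal.ofReal (s ^ (2*H-1) * Real.exp (-(b*s))) :=
          lintegral_const_mul' _ _ ENNReal.ofReal_ne_top
      _ ≤ ENNReal.ofReal (1/(2*H-1)) *
            ∫⁻ s in Set.Ioi (0:ℝ), ENNReal.ofReal (s ^ (2*H-1) * Real.exp (-(b*s))) := by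
          refine mul_le_mul_right ?_ _
          rw [setLIntegral_congr (Ioc_ae_eq_Icc (a := (0:ℝ)) (b := T)).symm]
          exact lintegral_mono_set Set.Ioc_subset_Ioi_self
      _ = ENNReal.ofReal (1/(2*H-1)) * ENNReal.ofReal ((1/b)^(2*H) * Real.Gamma (2*H)) := by
          have h := aux_gamma (r := 2*H) (by linarith : (0:ℝ) < 2*H) hb
          rw [h]
      _ = ENNReal.ofReal (Real.Gamma (2*H)/(2*H-1) * (1/b)^(2*H)) := by
          rw [← ENNReal.ofReal_mul (by positivity)]
          congr 1
          ring
  have TB : (∫⁻ s in Set.Icc (0:ℝ) T, ENNReal.ofReal (Real.exp (-b*s) * Y))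
      ≤ ENNReal.ofReal (Real.Gamma (2*H-1) * (1/b) ^ (2*H)) := by
    have hpow : (1/b) ^ ((2*H-1) + (1:ℝ)) = (1/b)^(2*H-1) * (1/b)^(1:ℝ) :=
      Real.rpow_add (by positivity) _ _
    rw [show (2*H-1) + (1:ℝ) = 2*H by ring, Real.rpow_one] at hpow
    calc (∫⁻ s in Set.Icc (0:ℝ) T, ENNReal.ofReal (Real.exp (-b*s) * Y))
        = ENNReal.ofReal Y * ∫⁻ s in Set.Icc (0:ℝ) T, ENNReal.ofReal (Real.exp (-(b*s))) := by
          rw [← lintegral_const_mul' _ _ ENNReal.ofReal_ne_top]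
          refine setLIntegral_congr_fun measurableSet_Icc (fun s hs => ?_)
          rw [← ENNReal.ofReal_mul hYnn]
          congr 1
          rw [neg_mul]
          ring
      _ ≤ ENNReal.ofReal Y * ∫⁻ s in Set.Ioi (0:ℝ), ENNReal.ofReal (Real.exp (-(b*s))) := by
          refine mul_le_mul_right ?_ _
          rw [setLIntegral_congr (Ioc_ae_eq_Icc (a := (0:ℝ)) (b := T)).symm]
          exact lintegral_mono_set Set.Ioc_subset_Ioi_self
      _ = ENNReal.ofReal Y * ENNReal.ofReal (1/b) := by rw [aux_exp hb]
      _ = ENNReal.ofReal (Real.Gamma (2*H-1) * (1/b) ^ (2*H)) := by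
          rw [← ENNReal.ofReal_mul hYnn]
          congr 1
          rw [hY, hpow]
          ring
  calc (∫⁻ s in Set.Icc (0 : ℝ) T, ∫⁻ t in Set.Icc (0 : ℝ) T,
        ENNReal.ofReal (Real.exp (-b * s) * Real.exp (-b * t) * |s - t| ^ (2 * H - 2)))
      ≤ ∫⁻ s in Set.Icc (0:ℝ) T,
          (ENNReal.ofReal (Real.exp (-b * s) * (s ^ (2*H-1) / (2*H-1)))
            + ENNReal.ofReal (Real.exp (-b * s) * Y)) :=
        setLIntegral_mono' measurableSet_Icc inner_bound
    _ = (∫⁻ s in Set.Icc (0:ℝ) T,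
          ENNReal.ofReal (Real.exp (-b * s) * (s ^ (2*H-1) / (2*H-1))))
        + ∫⁻ s in Set.Icc (0:ℝ) T, ENNReal.ofReal (Real.exp (-b * s) * Y) :=
        lintegral_add_left hmeas _
    _ ≤ ENNReal.ofReal (Real.Gamma (2*H) / (2*H-1) * (1/b) ^ (2*H))
        + ENNReal.ofReal (Real.Gamma (2*H-1) * (1/b) ^ (2*H)) := add_le_add TA TB
    _ = ENNReal.ofReal ((Real.Gamma (2 * H) / (2 * H - 1) + Real.Gamma (2 * H - 1))
          * (1 / b) ^ (2 * H)) := by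
        rw [← ENNReal.ofReal_add (by positivity)
          (by positivity)]
        congr 1
        ring

/-- For `H > 1/2`: if `∑ q_k²/λ_k^{2H} < ∞` then
`∑ q_k² ∫₀ᵀ∫₀ᵀ e^{-λ_k s} e^{-λ_k t} |s-t|^{2H-2} ds dt < ∞` (the Hilbert–Schmidt
criterion for the stochastic heat equation driven by cylindrical fBm). -/
theorem statement18 (H T : ℝ) (hH : H ∈ Set.Ioo (1 / 2 : ℝ) 1) (hT : 0 < T)
    (l : ℕ → ℝ) (hl : ∀ k, 0 < l k) (q : ℕ → ℝ)
    (hsum : Summable fun k => q k ^ 2 / (l k) ^ (2 * H)) :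
    (∑' k, ENNReal.ofReal (q k ^ 2) *
        ∫⁻ s in Set.Icc (0 : ℝ) T, ∫⁻ t in Set.Icc (0 : ℝ) T,
          ENNReal.ofReal (Real.exp (-(l k) * s) * Real.exp (-(l k) * t) *
            |s - t| ^ (2 * H - 2))) < ⊤ := by
  obtain ⟨hH1, hH2⟩ := hH
  set C : ℝ := Real.Gamma (2*H) / (2*H-1) + Real.Gamma (2*H-1) with hC
  have hCnn : 0 ≤ C := by
    have hg1 := Real.Gamma_pos_of_pos (by linarith : (0:ℝ) < 2*H)
    have hg2 := Real.Gamma_pos_of_pos (by linarith : (0:ℝ) < 2*H-1)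
    have : (0:ℝ) < 2*H-1 := by linarith
    positivity
  calc (∑' k, ENNReal.ofReal (q k ^ 2) *
        ∫⁻ s in Set.Icc (0 : ℝ) T, ∫⁻ t in Set.Icc (0 : ℝ) T,
          ENNReal.ofReal (Real.exp (-(l k) * s) * Real.exp (-(l k) * t) *
            |s - t| ^ (2 * H - 2)))
      ≤ ∑' k, ENNReal.ofReal C * ENNReal.ofReal (q k ^ 2 / (l k) ^ (2*H)) := by
        refine ENNReal.tsum_le_tsum fun k => ?_
        calc ENNReal.ofReal (q k ^ 2) *
              (∫⁻ s in Set.Icc (0 : ℝ) T, ∫⁻ t in Set.Icc (0 : ℝ) T,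
                ENNReal.ofReal (Real.exp (-(l k) * s) * Real.exp (-(l k) * t) *
                  |s - t| ^ (2 * H - 2)))
            ≤ ENNReal.ofReal (q k ^ 2) * ENNReal.ofReal (C * (1 / l k) ^ (2*H)) :=
              mul_le_mul_right (aux_main H T hH1 hH2 (hl k)) _
          _ = ENNReal.ofReal C * ENNReal.ofReal (q k ^ 2 / (l k) ^ (2*H)) := by
              rw [← ENNReal.ofReal_mul (sq_nonneg _), ← ENNReal.ofReal_mul hCnn]
              congr 1
              rw [one_div, Real.inv_rpow (hl k).le]
              ring
    _ = ENNReal.ofReal C * ∑' k, ENNReal.ofReal (q k ^ 2 / (l k) ^ (2*H)) :=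
        ENNReal.tsum_mul_left
    _ = ENNReal.ofReal C * ENNReal.ofReal (∑' k, q k ^ 2 / (l k) ^ (2*H)) := by
        rw [ENNReal.ofReal_tsum_of_nonneg (fun k => div_nonneg (sq_nonneg _) (Real.rpow_nonneg (hl k).le _)) hsum]
    _ < ⊤ := ENNReal.mul_lt_top ENNReal.ofReal_lt_top ENNReal.ofReal_lt_top
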